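/- Let μ > 0, μ̄̄ > 0, h ≥ 0, let k : ℝ → ℝ be continuous and monotone nondecreasing, and let α^{tr}, x be real numbers such that f^{tr} := x − √(2/3)·k(α^{tr}) > 0. Define G(γ) = x − 2μ̄̄(1 + h/(3μ))·γ − √(2/3)·k(α^{tr} + √(2/3)·γ). Then G is strictly decreasing on ℝ, and there exists a unique real number γ̂ with G(γ̂) = 0; moreover γ̂ > 0. -/

import Mathlib

/-- Well-posedness of the return-mapping consistency equation for a general
continuous nondecreasing isotropic hardening function `k`: under plastic loading
(`fᵗʳ = x − √(2/3) k(αᵗʳ) > 0`), the function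
`G(γ) = x − 2μ̄̄(1 + h/(3μ))γ − √(2/3) k(αᵗʳ + √(2/3)γ)` is strictly decreasing,
has a unique real zero `γ̂`, and this zero is positive. -/
theorem return_mapping_well_posed
    (μ μbb h : ℝ) (hμ : 0 < μ) (hμbb : 0 < μbb) (hh : 0 ≤ h)
    (k : ℝ → ℝ) (hk_cont : Continuous k) (hk_mono : Monotone k)
    (αtr x : ℝ) (hftr : 0 < x - Real.sqrt (2/3) * k αtr)
    (G : ℝ → ℝ)
    (hG : ∀ γ : ℝ, G γ = x - 2 * μbb * (1 + h / (3 * μ)) * γ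
        - Real.sqrt (2/3) * k (αtr + Real.sqrt (2/3) * γ)) :
    StrictAnti G ∧ (∃! γhat : ℝ, G γhat = 0) ∧ (∀ γhat : ℝ, G γhat = 0 → 0 < γhat) := by
  set c : ℝ := 2 * μbb * (1 + h / (3 * μ)) with hc
  have hs : (0:ℝ) ≤ Real.sqrt (2/3) := Real.sqrt_nonneg _
  have hcpos : 0 < c := by
    have : 0 < 1 + h / (3 * μ) := by positivity
    positivity
  have hanti : StrictAnti G := by
    intro a b hab
    rw [hG a, hG b]
    have hk : k (αtr + Real.sqrt (2/3) * a) ≤ k (αtr + Real.sqrt (2/3) * b) := by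
      apply hk_mono
      nlinarith
    nlinarith [mul_le_mul_of_nonneg_left hk hs, mul_lt_mul_of_pos_left hab hcpos]
  have hG0 : 0 < G 0 := by
    rw [hG 0]
    simpa using hftr
  refine ⟨hanti, ?_, ?_⟩
  · -- existence and uniqueness
    set γ1 : ℝ := G 0 / c with hγ1
    have hγ1pos : 0 < γ1 := div_pos hG0 hcpos
    have hGγ1 : G γ1 ≤ 0 := by
      have hk : k αtr ≤ k (αtr + Real.sqrt (2/3) * γ1) := by
        apply hk_mono; nlinarith
      have hG0' : G 0 = x - Real.sqrt (2/3) * k αtr := by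
        simpa using hG 0
      have hcγ1 : c * γ1 = x - Real.sqrt (2/3) * k αtr := by
        rw [← hG0', hγ1]; field_simp [hcpos.ne']
      rw [hG γ1]
      nlinarith [mul_le_mul_of_nonneg_left hk hs]
    have hcont : Continuous G := by
      have : G = fun γ => x - c * γ - Real.sqrt (2/3) * k (αtr + Real.sqrt (2/3) * γ) := by
        funext γ; exact hG γ
      rw [this]
      fun_prop
    have : (0:ℝ) ∈ Set.Icc (G γ1) (G 0) := ⟨hGγ1, le_of_lt hG0⟩
    have himg := intermediate_value_Icc' (le_of_lt hγ1pos) hcont.continuousOn this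
    obtain ⟨γhat, _, hγhat⟩ := himg
    exact ⟨γhat, hγhat, fun y hy => hanti.injective (hy.trans hγhat.symm)⟩
  · intro γhat hz
    by_contra hle
    push_neg at hle
    rcases eq_or_lt_of_le hle with heq | hlt
    · rw [heq] at hz; linarith
    · have := hanti hlt
      rw [hz] at this
      linarith
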